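/- Let h ∈ K̄[z] be nonzero with a part-p-th-power decomposition h = q^p + ρ satisfying t := v(ρ) − v(h) < p·v(p)/(p−1), where v is the Gauss valuation. Then there is no decomposition h = q₁^p + ρ₁ with v(ρ₁) − v(h) > t if and only if the normalized reduction of ρ (the reduction of γ^{-1}ρ to the residue field, for any scalar γ with v(γ) = v(ρ)) is not a p-th power of a polynomial over the residue field. -/

import Mathlib

open Polynomial
open scoped Classical

/-- An additive ℚ-valued valuation on a field `K`, recorded as a bare function with
the valuation axioms imposed only at nonzero elements (the value at `0` is junk). -/
structure AddVal (K : Type*) [Field K] where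
  v : K → ℚ
  map_one : v 1 = 0
  map_mul : ∀ x y : K, x ≠ 0 → y ≠ 0 → v (x * y) = v x + v y
  add_ge : ∀ x y : K, x ≠ 0 → y ≠ 0 → x + y ≠ 0 → min (v x) (v y) ≤ v (x + y)

variable {K : Type*} [Field K]

/-- The Gauss valuation of a polynomial: the minimum of the valuations of its
(nonzero) coefficients, with junk value `0` at the zero polynomial. -/
noncomputable def AddVal.gauss (w : AddVal K) (h : K[X]) : ℚ :=
  if hh : h = 0 then 0
  else h.support.inf' (Polynomial.support_nonempty.mpr hh) fun i => w.v (h.coeff i)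

/-- Gauss valuation valued in `ℚ ∪ {∞}`, taking the value `⊤` at the zero polynomial. -/
noncomputable def AddVal.gaussT (w : AddVal K) (h : K[X]) : WithTop ℚ :=
  if h = 0 then ⊤ else (w.gauss h : WithTop ℚ)

/-- The quantity `t = v(ρ) - v(h) ∈ ℚ ∪ {∞}` attached to a
part-`p`-th-power decomposition `h = q^p + ρ` (it is `⊤` when `ρ = 0`). -/
noncomputable def AddVal.tdiff (w : AddVal K) (h ρ : K[X]) : WithTop ℚ :=
  if ρ = 0 then ⊤ else ((w.gauss ρ - w.gauss h : ℚ) : WithTop ℚ)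

/-- `h = q ^ p + ρ` is a part-`p`-th-power decomposition (`deg q ≤ ⌊deg h / p⌋`). -/
def IsPartDecomp (p : ℕ) (h q ρ : K[X]) : Prop :=
  h = q ^ p + ρ ∧ q.natDegree ≤ h.natDegree / p

/-- The threshold `p·v(p)/(p-1)`. -/
noncomputable def pBound (w : AddVal K) (p : ℕ) : ℚ :=
  (p : ℚ) * w.v (p : K) / ((p : ℚ) - 1)

/-- A part-`p`-th-power decomposition is good if `t ≥ p·v(p)/(p-1)` or if no
decomposition achieves a strictly larger value of `t = v(ρ) - v(h)`. -/
def IsGoodDecomp (w : AddVal K) (p : ℕ) (h q ρ : K[X]) : Prop :=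
  IsPartDecomp p h q ρ ∧
    (((pBound w p : ℚ) : WithTop ℚ) ≤ w.tdiff h ρ ∨
      ∀ q₁ ρ₁ : K[X], IsPartDecomp p h q₁ ρ₁ → w.tdiff h ρ₁ ≤ w.tdiff h ρ)

set_option linter.unusedVariables false
set_option linter.unusedSectionVars false
set_option maxHeartbeats 1000000

namespace AddVal

variable (w : AddVal K)

lemma v_neg_one : w.v (-1) = 0 := by
  have h := w.map_mul (-1) (-1) (by norm_num) (by norm_num)
  simp only [neg_mul, one_mul, neg_neg, w.map_one] at h
  linarith

lemma v_neg {x : K} (hx : x ≠ 0) : w.v (-x) = w.v x := by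
  have : (-x) = (-1) * x := by ring
  rw [this, w.map_mul _ _ (by norm_num) hx, w.v_neg_one]; ring

lemma v_add_left {x y : K} (hx : x ≠ 0) (hy : y ≠ 0) (hlt : w.v x < w.v y) :
    x + y ≠ 0 ∧ w.v (x + y) = w.v x := by
  have hxy : x + y ≠ 0 := by
    intro h
    have hyx : y = -x := eq_neg_of_add_eq_zero_right h
    rw [hyx, w.v_neg hx] at hlt
    exact lt_irrefl _ hlt
  constructor
  · exact hxy
  · have h1 : min (w.v x) (w.v y) ≤ w.v (x + y) := w.add_ge x y hx hy hxy
    have h2 : w.v x ≥ min (w.v (x + y)) (w.v (-y)) := by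
      have : (x + y) + (-y) = x := by ring
      have := w.add_ge (x + y) (-y) hxy (by simpa using hy) (by rw [this]; exact hx)
      rwa [show (x + y) + (-y) = x by ring] at this
    rw [w.v_neg hy] at h2
    rw [min_def] at h1 h2
    split_ifs at h1 h2 <;> linarith

lemma v_pow {x : K} (hx : x ≠ 0) (n : ℕ) : w.v (x ^ n) = n * w.v x := by
  induction n with
  | zero => simpa using w.map_one
  | succ n ih =>
    rw [pow_succ, w.map_mul _ _ (pow_ne_zero _ hx) hx, ih]
    push_cast; ring

lemma v_natCast_nonneg [CharZero K] (n : ℕ) (hn : 0 < n) : 0 ≤ w.v (n : K) := by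
  induction n with
  | zero => omega
  | succ n ih =>
    rcases Nat.eq_zero_or_pos n with h | h
    · subst h; simpa using w.map_one.ge
    · have hn' : (n : K) ≠ 0 := Nat.cast_ne_zero.mpr h.ne'
      have hsum : ((n : K) + 1) ≠ 0 := by
        have : ((n + 1 : ℕ) : K) ≠ 0 := Nat.cast_ne_zero.mpr (by omega)
        push_cast at this; exact this
      have := w.add_ge (n : K) 1 hn' one_ne_zero hsum
      rw [w.map_one] at this
      push_cast
      calc (0:ℚ) ≤ min (w.v n) 0 := le_min (ih h) le_rfl
        _ ≤ _ := this

end AddVal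

namespace AddVal

variable {K : Type*} [Field K] (w : AddVal K)

lemma v_add_cases {P : ℚ → Prop} (hP : ∀ a b : ℚ, a ≤ b → P a → P b) {x y : K}
    (hx : x = 0 ∨ P (w.v x)) (hy : y = 0 ∨ P (w.v y)) :
    x + y = 0 ∨ P (w.v (x + y)) := by
  by_cases hx0 : x = 0
  · simpa [hx0] using hy
  by_cases hy0 : y = 0
  · simpa [hy0] using hx
  have hx' := hx.resolve_left hx0
  have hy' := hy.resolve_left hy0
  by_cases hxy : x + y = 0
  · left; exact hxy
  right
  have hmin := w.add_ge x y hx0 hy0 hxy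
  rcases min_cases (w.v x) (w.v y) with ⟨h, _⟩ | ⟨h, _⟩ <;> rw [h] at hmin
  · exact hP _ _ hmin hx'
  · exact hP _ _ hmin hy'

lemma v_sum {ι : Type*} {P : ℚ → Prop} (hP : ∀ a b : ℚ, a ≤ b → P a → P b)
    (s : Finset ι) (x : ι → K) (hx : ∀ i ∈ s, x i = 0 ∨ P (w.v (x i))) :
    (∑ i ∈ s, x i) = 0 ∨ P (w.v (∑ i ∈ s, x i)) := by
  classical
  induction s using Finset.induction_on with
  | empty => simp
  | @insert a s' hm ih =>
    rw [Finset.sum_insert hm]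
    exact w.v_add_cases hP (hx a (Finset.mem_insert_self a s'))
      (ih fun i hi => hx i (Finset.mem_insert_of_mem hi))

lemma gauss_le_v_coeff {f : K[X]} {i : ℕ} (hc : f.coeff i ≠ 0) :
    w.gauss f ≤ w.v (f.coeff i) := by
  have hf : f ≠ 0 := fun h => hc (by simp [h])
  rw [AddVal.gauss, dif_neg hf]
  exact Finset.inf'_le _ (Polynomial.mem_support_iff.mpr hc)

lemma exists_gauss_eq {f : K[X]} (hf : f ≠ 0) :
    ∃ i, f.coeff i ≠ 0 ∧ w.gauss f = w.v (f.coeff i) := by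
  rw [AddVal.gauss, dif_neg hf]
  obtain ⟨i, hi, hv⟩ := Finset.exists_mem_eq_inf' (Polynomial.support_nonempty.mpr hf)
    (fun i => w.v (f.coeff i))
  exact ⟨i, Polynomial.mem_support_iff.mp hi, hv⟩

lemma gauss_sum {ι : Type*} {P : ℚ → Prop} (hP : ∀ a b : ℚ, a ≤ b → P a → P b)
    (s : Finset ι) (F : ι → K[X]) (hF : ∀ i ∈ s, F i = 0 ∨ P (w.gauss (F i))) :
    (∑ i ∈ s, F i) = 0 ∨ P (w.gauss (∑ i ∈ s, F i)) := by
  by_cases hs : (∑ i ∈ s, F i) = 0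
  · left; exact hs
  right
  obtain ⟨j, hj, hvj⟩ := w.exists_gauss_eq hs
  rw [hvj]
  have hco : (∑ i ∈ s, F i).coeff j = ∑ i ∈ s, (F i).coeff j := by
    simp [Polynomial.finset_sum_coeff]
  have := w.v_sum hP s (fun i => (F i).coeff j) ?_
  · rw [← hco] at this
    rcases this with h0 | h
    · exact absurd h0 hj
    · exact h
  · intro i hi
    rcases hF i hi with h0 | hPi
    · left; simp [h0]
    · by_cases hci : (F i).coeff j = 0
      · left; exact hci
      · right; exact hP _ _ (w.gauss_le_v_coeff hci) hPi

lemma gauss_add_cases {P : ℚ → Prop} (hP : ∀ a b : ℚ, a ≤ b → P a → P b) {f g : K[X]}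
    (hf : f = 0 ∨ P (w.gauss f)) (hg : g = 0 ∨ P (w.gauss g)) :
    f + g = 0 ∨ P (w.gauss (f + g)) := by
  classical
  have := w.gauss_sum hP {true, false} (fun b => if b then f else g) ?_
  · simpa using this
  · intro i _; cases i <;> simpa

lemma gauss_neg (f : K[X]) : w.gauss (-f) = w.gauss f := by
  by_cases hf : f = 0
  · simp [hf]
  have h1 : ∀ g : K[X], g ≠ 0 → w.gauss g ≤ w.gauss (-g) := by
    intro g hg
    obtain ⟨i, hi, hv⟩ := w.exists_gauss_eq (neg_ne_zero.mpr hg)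
    rw [hv, Polynomial.coeff_neg] at *
    rw [w.v_neg (by simpa using hi)]
    exact w.gauss_le_v_coeff (by simpa using hi)
  have := h1 (-f) (neg_ne_zero.mpr hf)
  rw [neg_neg] at this
  exact le_antisymm this (h1 f hf)

lemma gauss_min {f g : K[X]} (hfg : f + g ≠ 0) (hf : f ≠ 0) (hg : g ≠ 0) :
    min (w.gauss f) (w.gauss g) ≤ w.gauss (f + g) := by
  have := w.gauss_add_cases (P := fun r => min (w.gauss f) (w.gauss g) ≤ r)
    (fun a b hab h => le_trans h hab) (f := f) (g := g)
    (Or.inr (min_le_left _ _)) (Or.inr (min_le_right _ _))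
  tauto

lemma gauss_add_left {f g : K[X]} (hf : f ≠ 0) (hg : g ≠ 0) (hlt : w.gauss f < w.gauss g) :
    f + g ≠ 0 ∧ w.gauss (f + g) = w.gauss f := by
  have hfg : f + g ≠ 0 := by
    intro h
    have : g = -f := by linear_combination h
    rw [this, w.gauss_neg] at hlt
    exact lt_irrefl _ hlt
  refine ⟨hfg, le_antisymm ?_ ?_⟩
  · have h2 : min (w.gauss (f + g)) (w.gauss (-g)) ≤ w.gauss f := by
      have := w.gauss_min (f := f + g) (g := -g) (by simpa using hf) hfg (neg_ne_zero.mpr hg)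
      simpa using this
    rw [w.gauss_neg] at h2
    rcases min_cases (w.gauss (f+g)) (w.gauss g) with ⟨h,_⟩|⟨h,_⟩ <;> rw [h] at h2 <;> linarith
  · have := w.gauss_min hfg hf hg
    rcases min_cases (w.gauss f) (w.gauss g) with ⟨h,_⟩|⟨h,hc⟩ <;> rw [h] at this <;> linarith

end AddVal

namespace AddVal

variable {K : Type*} [Field K] (w : AddVal K)

noncomputable def maxIdx (f : K[X]) : ℕ :=
  if hf : f = 0 then 0
  else (f.support.filter (fun i => w.v (f.coeff i) = w.gauss f)).max'
    (by
      obtain ⟨i, hi, hv⟩ := w.exists_gauss_eq hf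
      exact ⟨i, Finset.mem_filter.mpr ⟨Polynomial.mem_support_iff.mpr hi, hv.symm⟩⟩)

lemma maxIdx_spec {f : K[X]} (hf : f ≠ 0) :
    f.coeff (w.maxIdx f) ≠ 0 ∧ w.v (f.coeff (w.maxIdx f)) = w.gauss f := by
  have h := Finset.max'_mem (f.support.filter (fun i => w.v (f.coeff i) = w.gauss f))
    (by
      obtain ⟨i, hi, hv⟩ := w.exists_gauss_eq hf
      exact ⟨i, Finset.mem_filter.mpr ⟨Polynomial.mem_support_iff.mpr hi, hv.symm⟩⟩)
  rw [maxIdx, dif_neg hf]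
  have := Finset.mem_filter.mp h
  exact ⟨Polynomial.mem_support_iff.mp this.1, this.2⟩

lemma maxIdx_le {f : K[X]} (hf : f ≠ 0) {i : ℕ} (hc : f.coeff i ≠ 0)
    (hv : w.v (f.coeff i) = w.gauss f) : i ≤ w.maxIdx f := by
  rw [maxIdx, dif_neg hf]
  exact Finset.le_max' _ i (Finset.mem_filter.mpr ⟨Polynomial.mem_support_iff.mpr hc, hv⟩)

lemma gt_maxIdx {f : K[X]} (hf : f ≠ 0) {i : ℕ} (hi : w.maxIdx f < i) :
    f.coeff i = 0 ∨ w.gauss f < w.v (f.coeff i) := by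
  by_cases hc : f.coeff i = 0
  · left; exact hc
  right
  rcases lt_or_eq_of_le (w.gauss_le_v_coeff hc) with h | h
  · exact h
  · exact absurd (w.maxIdx_le hf hc h.symm) (not_le.mpr hi)

lemma gauss_maxIdx_mul {f g : K[X]} (hf : f ≠ 0) (hg : g ≠ 0) :
    w.gauss (f * g) = w.gauss f + w.gauss g ∧ w.maxIdx (f * g) = w.maxIdx f + w.maxIdx g := by
  set a := w.maxIdx f with ha
  set b := w.maxIdx g with hb
  have hfg : f * g ≠ 0 := mul_ne_zero hf hg
  -- coefficients above a+b are 0 or have valuation > gauss f + gauss g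
  have habove : ∀ n, a + b < n → (f * g).coeff n = 0 ∨
      w.gauss f + w.gauss g < w.v ((f * g).coeff n) := by
    intro n hn
    rw [Polynomial.coeff_mul]
    refine w.v_sum (P := fun r => w.gauss f + w.gauss g < r)
      (fun c d hcd h => lt_of_lt_of_le h hcd) _ _ ?_
    rintro ⟨x, y⟩ hxy
    have hsum : x + y = n := Finset.HasAntidiagonal.mem_antidiagonal.mp hxy
    simp only
    by_cases hfx : f.coeff x = 0
    · left; simp [hfx]
    by_cases hgy : g.coeff y = 0
    · left; simp [hgy]
    right
    rw [w.map_mul _ _ hfx hgy]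
    rcases lt_or_ge a x with hx | hx
    · rcases (w.gt_maxIdx hf hx) with h0 | hlt
      · exact absurd h0 hfx
      · have := w.gauss_le_v_coeff hgy
        linarith
    · have hy : b < y := by omega
      rcases (w.gt_maxIdx hg hy) with h0 | hlt
      · exact absurd h0 hgy
      · have := w.gauss_le_v_coeff hfx
        linarith
  -- all coefficients have valuation ≥ gauss f + gauss g
  have hall : ∀ n, (f * g).coeff n = 0 ∨
      w.gauss f + w.gauss g ≤ w.v ((f * g).coeff n) := by
    intro n
    rw [Polynomial.coeff_mul]
    refine w.v_sum (P := fun r => w.gauss f + w.gauss g ≤ r)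
      (fun c d hcd h => le_trans h hcd) _ _ ?_
    rintro ⟨x, y⟩ hxy
    simp only
    by_cases hfx : f.coeff x = 0
    · left; simp [hfx]
    by_cases hgy : g.coeff y = 0
    · left; simp [hgy]
    right
    rw [w.map_mul _ _ hfx hgy]
    exact add_le_add (w.gauss_le_v_coeff hfx) (w.gauss_le_v_coeff hgy)
  -- the coefficient at a+b has valuation exactly gauss f + gauss g
  have hmain : (f * g).coeff (a + b) ≠ 0 ∧
      w.v ((f * g).coeff (a + b)) = w.gauss f + w.gauss g := by
    rw [Polynomial.coeff_mul]
    have hmem : ((a, b) : ℕ × ℕ) ∈ Finset.HasAntidiagonal.antidiagonal (a + b) :=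
      Finset.HasAntidiagonal.mem_antidiagonal.mpr rfl
    rw [← Finset.sum_erase_add _ _ hmem]
    have hrest : (∑ x ∈ (Finset.HasAntidiagonal.antidiagonal (a + b)).erase (a, b),
        f.coeff x.1 * g.coeff x.2) = 0 ∨
        w.gauss f + w.gauss g < w.v (∑ x ∈ (Finset.HasAntidiagonal.antidiagonal (a + b)).erase (a, b),
          f.coeff x.1 * g.coeff x.2) := by
      refine w.v_sum (P := fun r => w.gauss f + w.gauss g < r)
        (fun c d hcd h => lt_of_lt_of_le h hcd) _ _ ?_
      rintro ⟨x, y⟩ hxy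
      have hmem' := Finset.mem_of_mem_erase hxy
      have hsum : x + y = a + b := Finset.HasAntidiagonal.mem_antidiagonal.mp hmem'
      have hne : (x, y) ≠ (a, b) := Finset.ne_of_mem_erase hxy
      simp only
      by_cases hfx : f.coeff x = 0
      · left; simp [hfx]
      by_cases hgy : g.coeff y = 0
      · left; simp [hgy]
      right
      rw [w.map_mul _ _ hfx hgy]
      rcases lt_trichotomy x a with hx | hx | hx
      · have hy : b < y := by omega
        rcases (w.gt_maxIdx hg hy) with h0 | hlt
        · exact absurd h0 hgy
        · have := w.gauss_le_v_coeff hfx; linarith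
      · refine absurd ?_ hne
        have hyb : y = b := by omega
        rw [hx, hyb]
      · rcases (w.gt_maxIdx hf hx) with h0 | hlt
        · exact absurd h0 hfx
        · have := w.gauss_le_v_coeff hgy; linarith
    have hmv : w.v (f.coeff a * g.coeff b) = w.gauss f + w.gauss g := by
      rw [w.map_mul _ _ (w.maxIdx_spec hf).1 (w.maxIdx_spec hg).1,
        (w.maxIdx_spec hf).2, (w.maxIdx_spec hg).2]
    have hm0 : f.coeff a * g.coeff b ≠ 0 :=
      mul_ne_zero (w.maxIdx_spec hf).1 (w.maxIdx_spec hg).1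
    by_cases hr0 : (∑ x ∈ (Finset.HasAntidiagonal.antidiagonal (a + b)).erase (a, b),
        f.coeff x.1 * g.coeff x.2) = 0
    · rw [hr0, zero_add]
      exact ⟨hm0, hmv⟩
    · have hlt := hrest.resolve_left hr0
      have hres := w.v_add_left (x := f.coeff a * g.coeff b)
        (y := ∑ x ∈ (Finset.HasAntidiagonal.antidiagonal (a + b)).erase (a, b), f.coeff x.1 * g.coeff x.2)
        hm0 hr0 (by rw [hmv]; exact hlt)
      rw [add_comm] at hres
      exact ⟨hres.1, hres.2.trans hmv⟩
  -- conclude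
  have hgeq : w.gauss (f * g) = w.gauss f + w.gauss g := by
    refine le_antisymm ?_ ?_
    · have := w.gauss_le_v_coeff hmain.1
      rw [hmain.2] at this; exact this
    · obtain ⟨j, hj, hvj⟩ := w.exists_gauss_eq hfg
      rw [hvj]
      exact (hall j).resolve_left hj
  refine ⟨hgeq, le_antisymm ?_ ?_⟩
  · by_contra hcon
    push_neg at hcon
    rcases habove _ hcon with h0 | h
    · exact (w.maxIdx_spec hfg).1 h0
    · rw [(w.maxIdx_spec hfg).2, hgeq] at h
      exact lt_irrefl _ h
  · exact w.maxIdx_le hfg hmain.1 (by rw [hmain.2, hgeq])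

end AddVal

namespace AddVal

variable {K : Type*} [Field K] (w : AddVal K)

lemma gauss_C {c : K} (hc : c ≠ 0) : w.gauss (Polynomial.C c) = w.v c := by
  refine le_antisymm ?_ ?_
  · have := w.gauss_le_v_coeff (f := Polynomial.C c) (i := 0) (by simpa using hc)
    simpa using this
  · obtain ⟨j, hj, hvj⟩ := w.exists_gauss_eq (f := Polynomial.C c) (by simpa using hc)
    rw [Polynomial.coeff_C] at hj hvj
    by_cases h0 : j = 0
    · rw [if_pos h0] at hvj; rw [hvj]
    · rw [if_neg h0] at hj; exact absurd rfl hj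

lemma maxIdx_C (c : K) : w.maxIdx (Polynomial.C c) = 0 := by
  by_cases hc : c = 0
  · simp [hc, maxIdx]
  have h := (w.maxIdx_spec (f := Polynomial.C c) (by simpa using hc)).1
  by_contra hne
  rw [Polynomial.coeff_C, if_neg hne] at h
  exact h rfl

lemma gauss_one : w.gauss 1 = 0 := by
  have := w.gauss_C (c := 1) one_ne_zero
  simpa [w.map_one] using this

lemma maxIdx_one : w.maxIdx (1 : K[X]) = 0 := by
  simpa using w.maxIdx_C 1

lemma gauss_maxIdx_pow {f : K[X]} (hf : f ≠ 0) (n : ℕ) :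
    w.gauss (f ^ n) = n * w.gauss f ∧ w.maxIdx (f ^ n) = n * w.maxIdx f := by
  induction n with
  | zero => simpa using ⟨w.gauss_one, w.maxIdx_one⟩
  | succ n ih =>
    have h := w.gauss_maxIdx_mul (pow_ne_zero n hf) hf
    rw [← pow_succ] at h
    constructor
    · rw [h.1, ih.1]; push_cast; ring
    · rw [h.2, ih.2]; ring

lemma gauss_pow {f : K[X]} (hf : f ≠ 0) (n : ℕ) : w.gauss (f ^ n) = n * w.gauss f :=
  (w.gauss_maxIdx_pow hf n).1

lemma gauss_mul {f g : K[X]} (hf : f ≠ 0) (hg : g ≠ 0) :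
    w.gauss (f * g) = w.gauss f + w.gauss g :=
  (w.gauss_maxIdx_mul hf hg).1

lemma gauss_prod {ι : Type*} (s : Finset ι) (F : ι → K[X]) (hF : ∀ i ∈ s, F i ≠ 0) :
    w.gauss (∏ i ∈ s, F i) = ∑ i ∈ s, w.gauss (F i) := by
  classical
  induction s using Finset.induction_on with
  | empty => simpa using w.gauss_one
  | @insert a s' hm ih =>
    rw [Finset.prod_insert hm, Finset.sum_insert hm,
      w.gauss_mul (hF a (Finset.mem_insert_self a s'))
        (Finset.prod_ne_zero_iff.mpr fun i hi => hF i (Finset.mem_insert_of_mem hi)),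
      ih fun i hi => hF i (Finset.mem_insert_of_mem hi)]

lemma v_prod {ι : Type*} (s : Finset ι) (x : ι → K) (hx : ∀ i ∈ s, x i ≠ 0) :
    w.v (∏ i ∈ s, x i) = ∑ i ∈ s, w.v (x i) := by
  classical
  induction s using Finset.induction_on with
  | empty => simpa using w.map_one
  | @insert a s' hm ih =>
    rw [Finset.prod_insert hm, Finset.sum_insert hm,
      w.map_mul _ _ (hx a (Finset.mem_insert_self a s'))
        (Finset.prod_ne_zero_iff.mpr fun i hi => hx i (Finset.mem_insert_of_mem hi)),
      ih fun i hi => hx i (Finset.mem_insert_of_mem hi)]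

end AddVal

namespace AddVal

open Polynomial

variable {K : Type*} [Field K] (w : AddVal K) {p : ℕ} {ζ : K}

lemma v_zeta_pow (hp : 0 < p) (hζ : IsPrimitiveRoot ζ p) (j : ℕ) : w.v (ζ ^ j) = 0 := by
  have hζ0 : ζ ≠ 0 := hζ.ne_zero hp.ne'
  have h1 : w.v (ζ ^ p) = p * w.v ζ := w.v_pow hζ0 p
  rw [hζ.pow_eq_one, w.map_one] at h1
  have hvζ : w.v ζ = 0 := by
    have hp' : (p : ℚ) ≠ 0 := Nat.cast_ne_zero.mpr hp.ne'
    field_simp at h1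
    exact (mul_eq_zero.mp h1.symm).resolve_left hp'
  rw [w.v_pow hζ0, hvζ, mul_zero]

/-- helper: `v (1 - u^m) ≥ v (1 - u)` for `u` of valuation zero. -/
lemma v_one_sub_pow_ge {u : K} (hu : u ≠ 0) (hvu : w.v u = 0) (m : ℕ)
    (hm : 1 - u ^ m ≠ 0) : w.v (1 - u) ≤ w.v (1 - u ^ m) := by
  have hiden : 1 - u ^ m = (1 - u) * ∑ j ∈ Finset.range m, u ^ j := by
    linear_combination geom_sum_mul u m
  have h1u : 1 - u ≠ 0 := by
    intro h; apply hm; rw [hiden, h, zero_mul]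
  have hS : (∑ j ∈ Finset.range m, u ^ j) ≠ 0 := by
    intro h; apply hm; rw [hiden, h, mul_zero]
  rw [hiden, w.map_mul _ _ h1u hS]
  have h0 : 0 ≤ w.v (∑ j ∈ Finset.range m, u ^ j) := by
    have := w.v_sum (P := fun r => 0 ≤ r) (fun a b hab h => le_trans h hab)
      (Finset.range m) (fun j => u ^ j) ?_
    · tauto
    · intro j _
      right
      rw [w.v_pow hu, hvu, mul_zero]
  linarith

lemma one_sub_zeta_pow_ne (hp : p.Prime) (hζ : IsPrimitiveRoot ζ p) {i : ℕ}
    (hi : 0 < i) (hip : i < p) : 1 - ζ ^ i ≠ 0 := by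
  intro h
  have : ζ ^ i = 1 := by linear_combination -h
  rw [hζ.pow_eq_one_iff_dvd] at this
  exact absurd (Nat.le_of_dvd hi this) (by omega)

lemma v_one_sub_zeta_pow (hp : p.Prime) (hζ : IsPrimitiveRoot ζ p) {i : ℕ}
    (hi : 0 < i) (hip : i < p) : w.v (1 - ζ ^ i) = w.v (1 - ζ) := by
  have hζ0 : ζ ≠ 0 := hζ.ne_zero hp.pos.ne'
  have hcop : Nat.Coprime i p := Nat.Coprime.symm (hp.coprime_iff_not_dvd.mpr (by
      intro hdvd; exact absurd (Nat.le_of_dvd hi hdvd) (by omega)))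
  obtain ⟨k, -, hk⟩ := Nat.exists_mul_mod_eq_one_of_coprime hcop hp.one_lt
  have hpow : (ζ ^ i) ^ k = ζ := by
    rw [← pow_mul]
    have hdm : p * (i * k / p) + (i * k) % p = i * k := Nat.div_add_mod (i * k) p
    calc ζ ^ (i * k) = ζ ^ (p * (i * k / p) + (i * k) % p) := by rw [hdm]
      _ = (ζ ^ p) ^ (i * k / p) * ζ ^ ((i * k) % p) := by rw [pow_add, pow_mul]
      _ = ζ := by rw [hζ.pow_eq_one, one_pow, one_mul, hk, pow_one]
  have h1z : 1 - (ζ ^ i) ^ k ≠ 0 := by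
    rw [hpow]
    simpa using one_sub_zeta_pow_ne hp hζ one_pos hp.one_lt
  have hle := w.v_one_sub_pow_ge (u := ζ ^ i) (pow_ne_zero _ hζ0)
    (w.v_zeta_pow hp.pos hζ i) k h1z
  rw [hpow] at hle
  refine le_antisymm hle (w.v_one_sub_pow_ge hζ0
    (by simpa using w.v_zeta_pow hp.pos hζ 1) i (one_sub_zeta_pow_ne hp hζ hi hip))

end AddVal

namespace AddVal

open Polynomial

variable {K : Type*} [Field K] (w : AddVal K) {p : ℕ} {ζ : K}

/-- The factorization `x^p - y^p = ∏ (x - ζ^i y)` in `K[X]`. -/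
lemma pow_sub_pow_factor (hp : 0 < p) (hζ : IsPrimitiveRoot ζ p) (x y : K[X]) :
    x ^ p - y ^ p = ∏ i ∈ Finset.range p, (x - Polynomial.C (ζ ^ i) * y) := by
  classical
  have hCζ : IsPrimitiveRoot (Polynomial.C ζ) p :=
    hζ.map_of_injective (Polynomial.C_injective)
  rw [hCζ.pow_sub_pow_eq_prod_sub_mul x y hp]
  refine (Finset.prod_bij (fun i _ => Polynomial.C ζ ^ i) ?_ ?_ ?_ ?_).symm
  · intro i _
    rw [Polynomial.mem_nthRootsFinset hp, ← pow_mul, mul_comm i p, pow_mul, hCζ.pow_eq_one,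
      one_pow]
  · intro i hi j hj hij
    exact hCζ.pow_inj (Finset.mem_range.mp hi) (Finset.mem_range.mp hj) hij
  · intro μ hμ
    have : ∃ i < p, Polynomial.C ζ ^ i = μ := by
      haveI : NeZero p := ⟨hp.ne'⟩
      exact hCζ.eq_pow_of_pow_eq_one ((Polynomial.mem_nthRootsFinset hp _).mp hμ)
    obtain ⟨i, hi, hiμ⟩ := this
    exact ⟨i, Finset.mem_range.mpr hi, hiμ⟩
  · intro i _
    simp [Polynomial.C_pow]

/-- `p = ∏_{i=1}^{p-1} (1 - ζ^i)`. -/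
lemma prime_eq_prod (hp : p.Prime) (hζ : IsPrimitiveRoot ζ p) :
    (p : K) = ∏ i ∈ Finset.Ico 1 p, (1 - ζ ^ i) := by
  classical
  have hfac := pow_sub_pow_factor hp.pos hζ (Polynomial.X : K[X]) 1
  rw [one_pow] at hfac
  have hsplit : (∏ i ∈ Finset.range p, ((Polynomial.X : K[X]) - Polynomial.C (ζ ^ i) * 1))
      = (Polynomial.X - 1) * ∏ i ∈ Finset.Ico 1 p, (Polynomial.X - Polynomial.C (ζ ^ i)) := by
    rw [Finset.range_eq_Ico, Finset.prod_eq_prod_Ico_succ_bot hp.pos]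
    simp [mul_one]
  rw [hsplit] at hfac
  have hgeom : ((∑ i ∈ Finset.range p, (Polynomial.X : K[X]) ^ i)) * (Polynomial.X - 1)
      = Polynomial.X ^ p - 1 := geom_sum_mul _ p
  have hX1 : (Polynomial.X - 1 : K[X]) ≠ 0 := by
    have := Polynomial.X_sub_C_ne_zero (1 : K)
    simpa using this
  have hcancel : (∑ i ∈ Finset.range p, (Polynomial.X : K[X]) ^ i)
      = ∏ i ∈ Finset.Ico 1 p, (Polynomial.X - Polynomial.C (ζ ^ i)) := by
    apply mul_right_cancel₀ hX1
    rw [hgeom, hfac]; ring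
  have := congrArg (Polynomial.eval (1 : K)) hcancel
  simpa [Polynomial.eval_prod, Polynomial.eval_geom_sum] using this

/-- `(p-1) · v(1-ζ) = v(p)`. -/
lemma vp_eq (hp : p.Prime) (hζ : IsPrimitiveRoot ζ p) :
    ((p : ℚ) - 1) * w.v (1 - ζ) = w.v (p : K) := by
  rw [prime_eq_prod hp hζ, w.v_prod _ _ (fun i hi => by
    have := Finset.mem_Ico.mp hi
    exact one_sub_zeta_pow_ne hp hζ this.1 this.2)]
  rw [Finset.sum_congr rfl (fun i hi => by
    have := Finset.mem_Ico.mp hi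
    exact w.v_one_sub_zeta_pow hp hζ this.1 this.2)]
  rw [Finset.sum_const, Nat.card_Ico, nsmul_eq_mul]
  have : 1 ≤ p := hp.pos
  push_cast [this]
  ring

lemma v_zeta_sub_zeta (hp : p.Prime) (hζ : IsPrimitiveRoot ζ p) {a b : ℕ}
    (ha : a < p) (hb : b < p) (hab : a ≠ b) :
    ζ ^ a - ζ ^ b ≠ 0 ∧ w.v (ζ ^ a - ζ ^ b) = w.v (1 - ζ) := by
  have hζ0 : ζ ≠ 0 := hζ.ne_zero hp.pos.ne'
  -- wlog b < a
  have key : ∀ a b : ℕ, b < a → a < p → ζ ^ a - ζ ^ b ≠ 0 ∧ w.v (ζ ^ a - ζ ^ b) = w.v (1 - ζ) := by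
    intro a b hba hap
    have hfact : ζ ^ a - ζ ^ b = (ζ ^ b) * -(1 - ζ ^ (a - b)) := by
      have : b + (a - b) = a := by omega
      calc ζ ^ a - ζ ^ b = ζ ^ b * (ζ ^ (a-b)) - ζ ^ b := by rw [← pow_add, this]
        _ = (ζ ^ b) * -(1 - ζ ^ (a - b)) := by ring
    have hne : (1 - ζ ^ (a - b)) ≠ 0 := one_sub_zeta_pow_ne hp hζ (by omega) (by omega)
    have hne2 : ζ ^ a - ζ ^ b ≠ 0 := by
      rw [hfact]
      exact mul_ne_zero (pow_ne_zero _ hζ0) (neg_ne_zero.mpr hne)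
    refine ⟨hne2, ?_⟩
    rw [hfact, w.map_mul _ _ (pow_ne_zero _ hζ0) (neg_ne_zero.mpr hne),
      w.v_neg hne, w.v_zeta_pow hp.pos hζ b, w.v_one_sub_zeta_pow hp hζ (by omega) (by omega),
      zero_add]
  rcases lt_or_gt_of_ne hab with h | h
  · have := key b a h hb
    have hneg : ζ ^ a - ζ ^ b = -(ζ ^ b - ζ ^ a) := by ring
    refine ⟨by rw [hneg]; exact neg_ne_zero.mpr this.1, ?_⟩
    rw [hneg, w.v_neg this.1, this.2]
  · exact key a b h ha

end AddVal

namespace AddVal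

open Polynomial

variable {K : Type*} [Field K] [CharZero K] (w : AddVal K)

lemma gauss_sub_eq {ρ ρ₀ : K[X]} (hρ : ρ ≠ 0)
    (hv : ρ₀ = 0 ∨ w.gauss ρ < w.gauss ρ₀) :
    ρ - ρ₀ ≠ 0 ∧ w.gauss (ρ - ρ₀) = w.gauss ρ := by
  by_cases h0 : ρ₀ = 0
  · subst h0; rw [sub_zero]; exact ⟨hρ, rfl⟩
  have hlt := hv.resolve_left h0
  have := w.gauss_add_left hρ (neg_ne_zero.mpr h0) (by rwa [w.gauss_neg])
  rw [← sub_eq_add_neg] at this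
  exact this

lemma v_natCast_choose_nonneg (a b : ℕ) : 0 ≤ w.v ((a.choose b : ℕ) : K) ∨ a.choose b = 0 := by
  rcases Nat.eq_zero_or_pos (a.choose b) with h | h
  · right; exact h
  · left; exact w.v_natCast_nonneg _ h

lemma trunc {p N : ℕ} (hp : p.Prime) {ρ s ρ₀ : K[X]} (hρ : ρ ≠ 0)
    (hdeg : ρ.natDegree < p * (N + 1)) (heq : ρ = s ^ p + ρ₀)
    (hv : ρ₀ = 0 ∨ w.gauss ρ < w.gauss ρ₀) :
    ∃ s' ρ₀' : K[X], s'.natDegree ≤ N ∧ ρ = s' ^ p + ρ₀' ∧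
      (ρ₀' = 0 ∨ w.gauss ρ < w.gauss ρ₀') ∧ s' ≠ 0 ∧ w.gauss (s' ^ p) = w.gauss ρ := by
  classical
  -- s ≠ 0
  have hs : s ≠ 0 := by
    rintro rfl
    rw [zero_pow hp.pos.ne', zero_add] at heq
    subst heq
    rcases hv with h | h
    · exact hρ h
    · exact lt_irrefl _ h
  -- gauss (s^p) = gauss ρ
  have hsp : w.gauss (s ^ p) = w.gauss ρ := by
    have : s ^ p = ρ - ρ₀ := by rw [heq]; ring
    rw [this]
    exact (w.gauss_sub_eq hρ hv).2
  -- truncation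
  set s₀ : K[X] := ∑ i ∈ Finset.range (N + 1), Polynomial.C (s.coeff i) * Polynomial.X ^ i
    with hs₀def
  have hs₀coeff : ∀ j, s₀.coeff j = if j ≤ N then s.coeff j else 0 := by
    intro j
    rw [hs₀def, Polynomial.finset_sum_coeff]
    have : ∀ i ∈ Finset.range (N + 1),
        (Polynomial.C (s.coeff i) * Polynomial.X ^ i).coeff j
          = if i = j then s.coeff i else 0 := by
      intro i _
      rw [Polynomial.coeff_C_mul, Polynomial.coeff_X_pow]
      by_cases h : j = i
      · simp [h]
      · simp [h, Ne.symm h]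
    rw [Finset.sum_congr rfl this, Finset.sum_ite_eq']
    by_cases hj : j ≤ N
    · rw [if_pos (Finset.mem_range.mpr (by omega)), if_pos hj]
    · rw [if_neg (by simp; omega), if_neg hj]
  have hs₀deg : s₀.natDegree ≤ N := by
    refine Polynomial.natDegree_sum_le_of_forall_le _ _ (fun i hi => ?_)
    exact le_trans (Polynomial.natDegree_C_mul_X_pow_le _ _) (by
      exact Nat.lt_succ_iff.mp (Finset.mem_range.mp hi))
  set s₁ : K[X] := s - s₀ with hs₁def
  have hs₁coeff : ∀ j, s₁.coeff j = if j ≤ N then 0 else s.coeff j := by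
    intro j
    rw [hs₁def, Polynomial.coeff_sub, hs₀coeff]
    by_cases hj : j ≤ N <;> simp [hj]
  -- key claim
  have hkey : s₁ = 0 ∨ (s₁ ≠ 0 ∧ w.gauss s < w.gauss s₁) := by
    by_cases h1 : s₁ = 0
    · left; exact h1
    refine Or.inr ⟨h1, ?_⟩
    by_contra hcon
    push_neg at hcon
    obtain ⟨j, hj, hvj⟩ := w.exists_gauss_eq h1
    have hjN : ¬ j ≤ N := by
      intro hle
      rw [hs₁coeff j, if_pos hle] at hj
      exact hj rfl
    rw [hs₁coeff j, if_neg hjN] at hj hvj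
    have hge : w.gauss s ≤ w.gauss s₁ := by rw [hvj]; exact w.gauss_le_v_coeff hj
    have heqg : w.gauss s₁ = w.gauss s := le_antisymm hcon hge
    -- maxIdx s > N
    have hd : N < w.maxIdx s := by
      have := w.maxIdx_le hs hj (by rw [← hvj, heqg])
      omega
    set d := w.maxIdx s with hdd
    have hpow := w.gauss_maxIdx_pow hs p
    have hcoeff : (s ^ p).coeff (p * d) ≠ 0 ∧ w.v ((s ^ p).coeff (p * d)) = w.gauss ρ := by
      have hspec := w.maxIdx_spec (pow_ne_zero p hs)
      rw [hpow.2] at hspec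
      exact ⟨hspec.1, by rw [hspec.2, hsp]⟩
    have hρcoeff : ρ.coeff (p * d) ≠ 0 := by
      rw [heq, Polynomial.coeff_add]
      by_cases h0 : ρ₀.coeff (p * d) = 0
      · rw [h0, add_zero]; exact hcoeff.1
      · have hρ₀ : ρ₀ ≠ 0 := fun hh => h0 (by rw [hh]; simp)
        have hlt := hv.resolve_left hρ₀
        have : w.v ((s ^ p).coeff (p * d)) < w.v (ρ₀.coeff (p * d)) := by
          rw [hcoeff.2]
          exact lt_of_lt_of_le hlt (w.gauss_le_v_coeff h0)
        exact (w.v_add_left hcoeff.1 h0 this).1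
    have hbig : ρ.natDegree < p * d := by
      calc ρ.natDegree < p * (N + 1) := hdeg
        _ ≤ p * d := Nat.mul_le_mul_left p (by omega)
    exact hρcoeff (Polynomial.coeff_eq_zero_of_natDegree_lt hbig)
  rcases hkey with h1 | ⟨hs₁ne, hlt⟩
  · -- s itself has degree ≤ N
    have hss : s = s₀ := by rw [← sub_eq_zero]; exact h1
    exact ⟨s, ρ₀, by rw [hss]; exact hs₀deg, heq, hv, hs, hsp⟩
  · -- replace s by s₀
    have hs₀ne : s₀ ≠ 0 := by
      intro h0
      have : s₁ = s := by rw [hs₁def, h0, sub_zero]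
      rw [this] at hlt
      exact lt_irrefl _ hlt
    have hgs₀ : w.gauss s₀ = w.gauss s := by
      have := w.gauss_add_left hs (neg_ne_zero.mpr hs₁ne) (by rwa [w.gauss_neg])
      have hrw : s + -s₁ = s₀ := by rw [hs₁def]; ring
      rw [hrw] at this
      exact this.2
    -- s^p - s₀^p = ∑_{i<p} s₀^i s₁^{p-i} (choose p i)
    have hbinom : s ^ p - s₀ ^ p = ∑ i ∈ Finset.range p,
        s₀ ^ i * s₁ ^ (p - i) * ((p.choose i : ℕ) : K[X]) := by
      have hadd : s = s₀ + s₁ := by rw [hs₁def]; ring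
      rw [hadd, add_pow, Finset.sum_range_succ]
      simp [Nat.sub_self]
    have hterm : ∀ i ∈ Finset.range p,
        (s₀ ^ i * s₁ ^ (p - i) * ((p.choose i : ℕ) : K[X])) = 0 ∨
        w.gauss ρ < w.gauss (s₀ ^ i * s₁ ^ (p - i) * ((p.choose i : ℕ) : K[X])) := by
      intro i hi
      have hip : i < p := Finset.mem_range.mp hi
      have hch : (p.choose i) ≠ 0 := (Nat.choose_pos hip.le).ne'
      have hchK : ((p.choose i : ℕ) : K) ≠ 0 := Nat.cast_ne_zero.mpr hch
      have hchPoly : ((p.choose i : ℕ) : K[X]) ≠ 0 := by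
        rw [← Polynomial.C_eq_natCast]
        simpa using hchK
      right
      have hne : s₀ ^ i * s₁ ^ (p - i) * ((p.choose i : ℕ) : K[X]) ≠ 0 :=
        mul_ne_zero (mul_ne_zero (pow_ne_zero _ hs₀ne) (pow_ne_zero _ hs₁ne)) hchPoly
      have hgv : w.gauss (s₀ ^ i * s₁ ^ (p - i) * ((p.choose i : ℕ) : K[X]))
          = i * w.gauss s₀ + (p - i : ℕ) * w.gauss s₁ + w.v ((p.choose i : ℕ) : K) := by
        rw [w.gauss_mul (mul_ne_zero (pow_ne_zero _ hs₀ne) (pow_ne_zero _ hs₁ne)) hchPoly,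
          w.gauss_mul (pow_ne_zero _ hs₀ne) (pow_ne_zero _ hs₁ne),
          w.gauss_pow hs₀ne, w.gauss_pow hs₁ne, ← Polynomial.C_eq_natCast, w.gauss_C hchK]
      rw [hgv]
      have hvch : 0 ≤ w.v ((p.choose i : ℕ) : K) :=
        w.v_natCast_nonneg _ (Nat.choose_pos hip.le)
      have hρg : w.gauss ρ = p * w.gauss s := by
        rw [← hsp, w.gauss_pow hs]
      rw [hρg, hgs₀]
      have hcast : ((p - i : ℕ) : ℚ) = (p : ℚ) - i := by
        push_cast [Nat.cast_sub hip.le]; ring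
      rw [hcast]
      have h1 : (1 : ℚ) ≤ (p : ℚ) - i := by
        have : (i : ℚ) + 1 ≤ p := by exact_mod_cast hip
        linarith
      nlinarith [hlt]
    have hsum := w.gauss_sum (P := fun r => w.gauss ρ < r)
      (fun a b hab hh => lt_of_lt_of_le hh hab) (Finset.range p) _ hterm
    rw [← hbinom] at hsum
    refine ⟨s₀, ρ₀ + (s ^ p - s₀ ^ p), hs₀deg, by rw [heq]; ring, ?_, hs₀ne, ?_⟩
    · exact w.gauss_add_cases (fun a b hab hh => lt_of_lt_of_le hh hab) hv hsum
    · rw [w.gauss_pow hs₀ne, hgs₀, ← w.gauss_pow hs, hsp]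

end AddVal

namespace AddVal

open Polynomial

variable {K : Type*} [Field K] [CharZero K] (w : AddVal K)

/-- `v` of a nonzero binomial coefficient `choose p i` with `0 < i < p` is `≥ v p`. -/
lemma v_choose_ge (p : ℕ) (hp : p.Prime) {i : ℕ} (hi0 : 0 < i) (hip : i < p) :
    w.v (p : K) ≤ w.v ((p.choose i : ℕ) : K) := by
  obtain ⟨m, hm⟩ := hp.dvd_choose_self hi0.ne' hip
  have hm0 : 0 < m := by
    rcases Nat.eq_zero_or_pos m with h | h
    · exfalso; rw [h, mul_zero] at hm; exact (Nat.choose_pos hip.le).ne' hm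
    · exact h
  have hcast : ((p.choose i : ℕ) : K) = (p : K) * (m : K) := by
    rw [hm]; push_cast; ring
  rw [hcast, w.map_mul _ _ (Nat.cast_ne_zero.mpr hp.pos.ne') (Nat.cast_ne_zero.mpr hm0.ne')]
  have := w.v_natCast_nonneg m hm0
  linarith

end AddVal

namespace AddVal

open Polynomial Finset

variable {K : Type*} [Field K] [CharZero K] (w : AddVal K)

/-- Direction 1 (core, case `t ≥ 0`): from a part-pth-power decomposition of `ρ` with
a strictly smaller remainder one can improve the decomposition of `h`. -/
lemma improve {p : ℕ} (hp : p.Prime) {h q ρ : K[X]} (hh : h ≠ 0) (hρ : ρ ≠ 0)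
    (hdec : h = q ^ p + ρ) (hdq : q.natDegree ≤ h.natDegree / p)
    (hty : w.gauss h ≤ w.gauss ρ)
    (ht : w.gauss ρ - w.gauss h < (p : ℚ) * w.v (p : K) / ((p : ℚ) - 1))
    {s ρ₀ : K[X]} (heq : ρ = s ^ p + ρ₀) (hlt : ρ₀ = 0 ∨ w.gauss ρ < w.gauss ρ₀) :
    ∃ q₁ ρ₁ : K[X], (h = q₁ ^ p + ρ₁ ∧ q₁.natDegree ≤ h.natDegree / p) ∧
      (ρ₁ = 0 ∨ w.gauss ρ < w.gauss ρ₁) := by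
  classical
  set N := h.natDegree / p with hN
  have hp2 : (2 : ℚ) ≤ (p : ℚ) := by exact_mod_cast hp.two_le
  have hp0 : (0 : ℚ) < (p : ℚ) := by linarith
  -- degree bound on ρ
  have hdegρ : ρ.natDegree < p * (N + 1) := by
    have h1 : ρ.natDegree ≤ h.natDegree := by
      have hρeq : ρ = h - q ^ p := by rw [hdec]; ring
      have h2 : (q ^ p).natDegree ≤ h.natDegree := by
        rw [Polynomial.natDegree_pow]
        calc p * q.natDegree ≤ p * N := Nat.mul_le_mul_left p hdq
          _ ≤ h.natDegree := Nat.mul_div_le _ _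
      calc ρ.natDegree = (h - q ^ p).natDegree := by rw [hρeq]
        _ ≤ max h.natDegree (q ^ p).natDegree := Polynomial.natDegree_sub_le _ _
        _ ≤ h.natDegree := max_le le_rfl h2
    have h2 : p * N + h.natDegree % p = h.natDegree := Nat.div_add_mod h.natDegree p
    have h3 : h.natDegree % p < p := Nat.mod_lt _ hp.pos
    have h4 : p * (N + 1) = p * N + p := by ring
    omega
  obtain ⟨s', ρ₀', hs'deg, heq', hlt', hs'ne, hs'g⟩ := w.trunc hp hρ hdegρ heq hlt
  refine ⟨q + s', h - (q + s') ^ p, ⟨by ring, ?_⟩, ?_⟩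
  · exact le_trans (Polynomial.natDegree_add_le _ _) (max_le hdq hs'deg)
  -- the binomial expansion
  have hbinom : (q + s') ^ p = q ^ p + s' ^ p +
      ∑ i ∈ Finset.Ico 1 p, q ^ i * s' ^ (p - i) * ((p.choose i : ℕ) : K[X]) := by
    rw [add_pow, Finset.sum_range_succ, Finset.range_eq_Ico,
      Finset.sum_eq_sum_Ico_succ_bot hp.pos]
    simp [Nat.sub_self]
    ring
  have hρ₁eq : h - (q + s') ^ p =
      ρ₀' + ∑ i ∈ Finset.Ico 1 p, -(q ^ i * s' ^ (p - i) * ((p.choose i : ℕ) : K[X])) := by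
    rw [hbinom, hdec, heq', Finset.sum_neg_distrib]
    ring
  -- each term of the sum is zero or has gauss valuation > gauss ρ
  have hterm : ∀ i ∈ Finset.Ico 1 p,
      -(q ^ i * s' ^ (p - i) * ((p.choose i : ℕ) : K[X])) = 0 ∨
      w.gauss ρ < w.gauss (-(q ^ i * s' ^ (p - i) * ((p.choose i : ℕ) : K[X]))) := by
    intro i hi
    obtain ⟨hi1, hip⟩ := Finset.mem_Ico.mp hi
    by_cases hq0 : q = 0
    · left; rw [hq0, zero_pow (by omega), zero_mul, zero_mul, neg_zero]
    right
    have hchne : ((p.choose i : ℕ) : K) ≠ 0 :=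
      Nat.cast_ne_zero.mpr (Nat.choose_pos hip.le).ne'
    have hchpoly : ((p.choose i : ℕ) : K[X]) ≠ 0 := by
      rw [← Polynomial.C_eq_natCast]; simpa using hchne
    have hne : q ^ i * s' ^ (p - i) * ((p.choose i : ℕ) : K[X]) ≠ 0 :=
      mul_ne_zero (mul_ne_zero (pow_ne_zero _ hq0) (pow_ne_zero _ hs'ne)) hchpoly
    rw [w.gauss_neg, w.gauss_mul (mul_ne_zero (pow_ne_zero _ hq0) (pow_ne_zero _ hs'ne)) hchpoly,
      w.gauss_mul (pow_ne_zero _ hq0) (pow_ne_zero _ hs'ne), w.gauss_pow hq0,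
      w.gauss_pow hs'ne, ← Polynomial.C_eq_natCast, w.gauss_C hchne]
    -- numeric bound
    have hgq : w.gauss h ≤ (p : ℚ) * w.gauss q := by
      have hqp : q ^ p = h + -ρ := by rw [hdec]; ring
      have hmin := w.gauss_min (f := h) (g := -ρ)
        (by rw [← hqp]; exact pow_ne_zero _ hq0) hh (neg_ne_zero.mpr hρ)
      rw [← hqp, w.gauss_pow hq0, w.gauss_neg] at hmin
      rcases min_cases (w.gauss h) (w.gauss ρ) with ⟨hc, _⟩ | ⟨hc, _⟩ <;> rw [hc] at hmin <;>
        linarith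
    have hgs : (p : ℚ) * w.gauss s' = w.gauss ρ := by
      rw [← w.gauss_pow hs'ne, hs'g]
    have hch := w.v_choose_ge p hp hi1 hip
    have hcast : ((p - i : ℕ) : ℚ) = (p : ℚ) - (i : ℚ) := by
      push_cast [Nat.cast_sub hip.le]; ring
    rw [hcast]
    have hi1q : (1 : ℚ) ≤ (i : ℚ) := by exact_mod_cast hi1
    have hipq : (i : ℚ) ≤ (p : ℚ) - 1 := by
      have : (i : ℚ) + 1 ≤ (p : ℚ) := by exact_mod_cast hip
      linarith
    have htmul : (w.gauss ρ - w.gauss h) * ((p : ℚ) - 1) < (p : ℚ) * w.v (p : K) := by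
      exact (lt_div_iff₀ (by linarith : (0:ℚ) < (p : ℚ) - 1)).mp ht
    have htnn : 0 ≤ w.gauss ρ - w.gauss h := by linarith
    nlinarith [mul_le_mul_of_nonneg_left hgq (by linarith : (0:ℚ) ≤ (i:ℚ)),
      mul_le_mul_of_nonneg_right hipq htnn]
  have hsum := w.gauss_sum (P := fun r => w.gauss ρ < r)
    (fun a b hab hh' => lt_of_lt_of_le hh' hab) (Finset.Ico 1 p) _ hterm
  rw [hρ₁eq]
  exact w.gauss_add_cases (fun a b hab hh' => lt_of_lt_of_le hh' hab) hlt' hsum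

end AddVal

namespace AddVal

open Polynomial Finset

variable {K : Type*} [Field K] [CharZero K] (w : AddVal K)

/-- Direction 2 (core, case `t ≥ 0`, `q ≠ 0`, `q₁ ≠ 0`). -/
lemma extract {p : ℕ} (hp : p.Prime) {ζ : K} (hζ : IsPrimitiveRoot ζ p)
    {h q ρ q₁ ρ₁ : K[X]} (hh : h ≠ 0) (hρ : ρ ≠ 0) (hq : q ≠ 0) (hq₁ : q₁ ≠ 0)
    (hdec : h = q ^ p + ρ) (hdec₁ : h = q₁ ^ p + ρ₁)
    (hty : w.gauss h ≤ w.gauss ρ)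
    (ht : w.gauss ρ - w.gauss h < (p : ℚ) * w.v (p : K) / ((p : ℚ) - 1))
    (hb : ρ₁ = 0 ∨ w.gauss ρ < w.gauss ρ₁) :
    ∃ s ρ₀ : K[X], ρ = s ^ p + ρ₀ ∧ (ρ₀ = 0 ∨ w.gauss ρ < w.gauss ρ₀) := by
  classical
  have hp2 : (2 : ℚ) ≤ (p : ℚ) := by exact_mod_cast hp.two_le
  have hp0 : (0 : ℚ) < (p : ℚ) := by linarith
  set δ : ℕ → K[X] := fun j => q₁ - Polynomial.C (ζ ^ j) * q with hδdef
  have hδne : ∀ j, δ j ≠ 0 := by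
    intro j hj0
    have hq₁eq : q₁ = Polynomial.C (ζ ^ j) * q := by
      have := sub_eq_zero.mp hj0
      exact this
    have hq₁p : q₁ ^ p = q ^ p := by
      rw [hq₁eq, mul_pow, ← Polynomial.C_pow, ← pow_mul, mul_comm j p, pow_mul,
        hζ.pow_eq_one, one_pow, Polynomial.C_1, one_mul]
    have hρeq : ρ = ρ₁ := by
      have h1 : q ^ p + ρ = q₁ ^ p + ρ₁ := by rw [← hdec, ← hdec₁]
      rw [hq₁p] at h1
      exact add_left_cancel h1
    rcases hb with h0 | hlt
    · exact hρ (hρeq.trans h0)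
    · rw [← hρeq] at hlt; exact lt_irrefl _ hlt
  have hprod : ∏ j ∈ Finset.range p, δ j = q₁ ^ p - q ^ p :=
    (pow_sub_pow_factor hp.pos hζ q₁ q).symm
  have hsub : q₁ ^ p - q ^ p = ρ - ρ₁ := by
    have h1 : q ^ p + ρ = q₁ ^ p + ρ₁ := by rw [← hdec, ← hdec₁]
    linear_combination -h1
  have hgsub := w.gauss_sub_eq hρ hb
  have hsumδ : ∑ j ∈ Finset.range p, w.gauss (δ j) = w.gauss ρ := by
    rw [← w.gauss_prod _ _ (fun j _ => hδne j), hprod, hsub, hgsub.2]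
  -- valuation bounds for q and q₁
  have hgq : w.gauss h ≤ (p : ℚ) * w.gauss q := by
    have hqp : q ^ p = h + -ρ := by rw [hdec]; ring
    have hmin := w.gauss_min (f := h) (g := -ρ)
      (by rw [← hqp]; exact pow_ne_zero _ hq) hh (neg_ne_zero.mpr hρ)
    rw [← hqp, w.gauss_pow hq, w.gauss_neg] at hmin
    rcases min_cases (w.gauss h) (w.gauss ρ) with ⟨hc, _⟩ | ⟨hc, _⟩ <;> rw [hc] at hmin <;>
      linarith
  -- the minimizing index
  obtain ⟨j₀, hj₀mem, hj₀min⟩ := Finset.exists_min_image (Finset.range p)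
    (fun j => w.gauss (δ j)) ⟨0, Finset.mem_range.mpr hp.pos⟩
  set m := w.gauss (δ j₀) with hm
  set lam := w.v (1 - ζ) with hlam
  have hvp : ((p : ℚ) - 1) * lam = w.v (p : K) := w.vp_eq hp hζ
  by_cases hcase : lam + w.gauss q ≤ m
  · -- case A: contradiction with ht
    exfalso
    have hall : ∀ j ∈ Finset.range p, m ≤ w.gauss (δ j) := hj₀min
    have hsum_ge : (p : ℚ) * m ≤ w.gauss ρ := by
      rw [← hsumδ]
      calc (p : ℚ) * m = ∑ _j ∈ Finset.range p, m := by
            rw [Finset.sum_const, Finset.card_range, nsmul_eq_mul]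
        _ ≤ ∑ j ∈ Finset.range p, w.gauss (δ j) := Finset.sum_le_sum hall
    have htm : (w.gauss ρ - w.gauss h) * ((p : ℚ) - 1) < (p : ℚ) * w.v (p : K) :=
      (lt_div_iff₀ (by linarith : (0:ℚ) < (p : ℚ) - 1)).mp ht
    have h1 : (p:ℚ) * (lam + w.gauss q) ≤ (p:ℚ) * m :=
      mul_le_mul_of_nonneg_left hcase (le_of_lt hp0)
    have h2 : (p:ℚ) * lam ≤ w.gauss ρ - w.gauss h := by nlinarith
    have h3 : ((p:ℚ) * lam) * ((p:ℚ) - 1) ≤ (w.gauss ρ - w.gauss h) * ((p:ℚ) - 1) :=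
      mul_le_mul_of_nonneg_right h2 (by linarith)
    nlinarith
  -- case B
  push_neg at hcase
  have hgδ : ∀ j ∈ Finset.range p, w.gauss (δ j) = m := by
    intro j hj
    by_cases hjj : j = j₀
    · rw [hjj]
    have hμ := w.v_zeta_sub_zeta hp hζ (Finset.mem_range.mp hj₀mem) (Finset.mem_range.mp hj)
      (fun hc => hjj (by omega))
    have hδj : δ j = δ j₀ + Polynomial.C (ζ ^ j₀ - ζ ^ j) * q := by
      rw [hδdef]
      simp only [Polynomial.C_sub]
      ring
    have hCne : Polynomial.C (ζ ^ j₀ - ζ ^ j) * q ≠ 0 :=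
      mul_ne_zero (Polynomial.C_ne_zero.mpr hμ.1) hq
    have hgC : w.gauss (Polynomial.C (ζ ^ j₀ - ζ ^ j) * q) = lam + w.gauss q := by
      rw [w.gauss_mul (Polynomial.C_ne_zero.mpr hμ.1) hq, w.gauss_C hμ.1, hμ.2]
    have hres := w.gauss_add_left (hδne j₀) hCne (by rw [hgC]; exact hcase)
    rw [hδj]
    exact hres.2
  have hpm : (p : ℚ) * m = w.gauss ρ := by
    rw [← hsumδ, Finset.sum_congr rfl hgδ, Finset.sum_const, Finset.card_range, nsmul_eq_mul]
  refine ⟨δ j₀, ρ - (δ j₀) ^ p, by ring, ?_⟩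
  -- expand the product
  have hexp : ∏ j ∈ Finset.range p, δ j = ∑ T ∈ (Finset.range p).powerset,
      (∏ j ∈ T, Polynomial.C (ζ ^ j₀ - ζ ^ j) * q) * (δ j₀) ^ ((Finset.range p \ T).card) := by
    have hδeq : ∀ j ∈ Finset.range p, δ j = (Polynomial.C (ζ ^ j₀ - ζ ^ j) * q) + δ j₀ := by
      intro j _
      rw [hδdef]
      simp only [Polynomial.C_sub]
      ring
    rw [Finset.prod_congr rfl hδeq, Finset.prod_add]
    exact Finset.sum_congr rfl (fun T hT => by rw [Finset.prod_const])
  have hterm : ∀ T ∈ (Finset.range p).powerset.erase ∅,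
      ((∏ j ∈ T, Polynomial.C (ζ ^ j₀ - ζ ^ j) * q) * (δ j₀) ^ ((Finset.range p \ T).card)) = 0 ∨
      w.gauss ρ < w.gauss
        ((∏ j ∈ T, Polynomial.C (ζ ^ j₀ - ζ ^ j) * q) * (δ j₀) ^ ((Finset.range p \ T).card)) := by
    intro T hT
    have hTsub : T ⊆ Finset.range p := Finset.mem_powerset.mp (Finset.mem_of_mem_erase hT)
    have hTne : T ≠ ∅ := Finset.ne_of_mem_erase hT
    by_cases hj₀T : j₀ ∈ T
    · left
      rw [Finset.prod_eq_zero hj₀T (by rw [sub_self, Polynomial.C_0, zero_mul]), zero_mul]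
    right
    have hfac : ∀ j ∈ T, Polynomial.C (ζ ^ j₀ - ζ ^ j) * q ≠ 0 := by
      intro j hj
      have hμ := w.v_zeta_sub_zeta hp hζ (Finset.mem_range.mp hj₀mem)
        (Finset.mem_range.mp (hTsub hj)) (fun hc => hj₀T (by rw [hc]; exact hj))
      exact mul_ne_zero (Polynomial.C_ne_zero.mpr hμ.1) hq
    have hprodne : (∏ j ∈ T, Polynomial.C (ζ ^ j₀ - ζ ^ j) * q) ≠ 0 :=
      Finset.prod_ne_zero_iff.mpr hfac
    have hgfac : ∀ j ∈ T, w.gauss (Polynomial.C (ζ ^ j₀ - ζ ^ j) * q) = lam + w.gauss q := by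
      intro j hj
      have hμ := w.v_zeta_sub_zeta hp hζ (Finset.mem_range.mp hj₀mem)
        (Finset.mem_range.mp (hTsub hj)) (fun hc => hj₀T (by rw [hc]; exact hj))
      rw [w.gauss_mul (Polynomial.C_ne_zero.mpr hμ.1) hq, w.gauss_C hμ.1, hμ.2]
    have hgprod : w.gauss (∏ j ∈ T, Polynomial.C (ζ ^ j₀ - ζ ^ j) * q)
        = (T.card : ℚ) * (lam + w.gauss q) := by
      rw [w.gauss_prod _ _ hfac, Finset.sum_congr rfl hgfac, Finset.sum_const, nsmul_eq_mul]
    have hcard : (Finset.range p \ T).card = p - T.card := by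
      rw [Finset.card_sdiff_of_subset hTsub, Finset.card_range]
    have hT1 : 1 ≤ T.card := Finset.card_pos.mpr (Finset.nonempty_of_ne_empty hTne)
    have hTp : T.card ≤ p := by
      have := Finset.card_le_card hTsub
      rwa [Finset.card_range] at this
    rw [w.gauss_mul hprodne (pow_ne_zero _ (hδne j₀)), hgprod, w.gauss_pow (hδne j₀), hcard]
    have hcast : ((p - T.card : ℕ) : ℚ) = (p : ℚ) - (T.card : ℚ) := by
      push_cast [Nat.cast_sub hTp]; ring
    rw [hcast]
    have hc1 : (1 : ℚ) ≤ (T.card : ℚ) := by exact_mod_cast hT1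
    nlinarith
  have hsum := w.gauss_sum (P := fun r => w.gauss ρ < r)
    (fun a b hab hh' => lt_of_lt_of_le hh' hab) ((Finset.range p).powerset.erase ∅) _ hterm
  have hsplit : ρ - (δ j₀) ^ p = (∑ T ∈ (Finset.range p).powerset.erase ∅,
      (∏ j ∈ T, Polynomial.C (ζ ^ j₀ - ζ ^ j) * q) * (δ j₀) ^ ((Finset.range p \ T).card)) + ρ₁ := by
    have hmem : ∅ ∈ (Finset.range p).powerset := Finset.empty_mem_powerset _
    have hadd := Finset.add_sum_erase _ (fun T => (∏ j ∈ T, Polynomial.C (ζ ^ j₀ - ζ ^ j) * q)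
      * (δ j₀) ^ ((Finset.range p \ T).card)) hmem
    have hempty : ((∏ j ∈ (∅ : Finset ℕ), Polynomial.C (ζ ^ j₀ - ζ ^ j) * q)
        * (δ j₀) ^ ((Finset.range p \ (∅ : Finset ℕ)).card)) = (δ j₀) ^ p := by
      rw [Finset.prod_empty, one_mul, Finset.sdiff_empty, Finset.card_range]
    have hfull : (∑ T ∈ (Finset.range p).powerset,
        (∏ j ∈ T, Polynomial.C (ζ ^ j₀ - ζ ^ j) * q) * (δ j₀) ^ ((Finset.range p \ T).card))
        = ρ - ρ₁ := by
      rw [← hexp, hprod, hsub]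
    linear_combination hempty - hfull - hadd
  rw [hsplit]
  exact w.gauss_add_cases (fun a b hab hh' => lt_of_lt_of_le hh' hab) hsum hb

end AddVal

/-- Proposition 4.6: a part-`p`-th-power decomposition `h = q^p + ρ` with
`t = v(ρ) - v(h) < p·v(p)/(p-1)` admits no decomposition with strictly larger `t` if and
only if the normalized reduction of `ρ` is not a `p`-th power over the residue field.
Since the base field is algebraically closed (so its value group is divisible and its
residue field is algebraically closed), the normalized reduction of `ρ` being a `p`-th
power over the residue field is equivalent to the existence of `s, ρ₀` with
`ρ = s^p + ρ₀` and `v(ρ₀) > v(ρ)`, which is the formulation used here. -/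
theorem statement3 {K : Type*} [Field K] [CharZero K] [IsAlgClosed K]
    (w : AddVal K) (p : ℕ) (hp : p.Prime) (ζ : K) (hζ : IsPrimitiveRoot ζ p)
    (h q ρ : K[X]) (hh : h ≠ 0) (hρ : ρ ≠ 0) (hd : IsPartDecomp p h q ρ)
    (ht : w.gauss ρ - w.gauss h < pBound w p) :
    (∀ q₁ ρ₁ : K[X], IsPartDecomp p h q₁ ρ₁ → w.tdiff h ρ₁ ≤ w.tdiff h ρ)
      ↔ ¬ ∃ s ρ₀ : K[X], ρ = s ^ p + ρ₀ ∧ w.gaussT ρ < w.gaussT ρ₀ := by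
  obtain ⟨hdec, hdq⟩ := hd
  rw [pBound] at ht
  have toT : ∀ ρ₀ : K[X], (ρ₀ = 0 ∨ w.gauss ρ < w.gauss ρ₀) → w.gaussT ρ < w.gaussT ρ₀ := by
    intro ρ₀ hc
    rw [AddVal.gaussT, AddVal.gaussT, if_neg hρ]
    by_cases h0 : ρ₀ = 0
    · rw [if_pos h0]; exact WithTop.coe_lt_top _
    · rw [if_neg h0]; exact_mod_cast hc.resolve_left h0
  have fromT : ∀ ρ₀ : K[X], w.gaussT ρ < w.gaussT ρ₀ → (ρ₀ = 0 ∨ w.gauss ρ < w.gauss ρ₀) := by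
    intro ρ₀ hc
    by_cases h0 : ρ₀ = 0
    · left; exact h0
    · right
      rw [AddVal.gaussT, AddVal.gaussT, if_neg hρ, if_neg h0] at hc
      exact_mod_cast hc
  constructor
  · -- no improvement ⟹ no p-th-power approximation of ρ
    intro hLHS
    rintro ⟨s, ρ₀, heq, hlt⟩
    have hlt' := fromT ρ₀ hlt
    by_cases hty : w.gauss h ≤ w.gauss ρ
    · obtain ⟨q₁, ρ₁, ⟨hdec₁, hdq₁⟩, himp⟩ := w.improve hp hh hρ hdec hdq hty ht heq hlt'
      have hle := hLHS q₁ ρ₁ ⟨hdec₁, hdq₁⟩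
      rw [AddVal.tdiff, AddVal.tdiff, if_neg hρ] at hle
      by_cases h0 : ρ₁ = 0
      · rw [if_pos h0] at hle
        simp at hle
      · rw [if_neg h0] at hle
        have hgl := himp.resolve_left h0
        have : w.gauss ρ₁ - w.gauss h ≤ w.gauss ρ - w.gauss h := by exact_mod_cast hle
        linarith
    · push_neg at hty
      have hle := hLHS 0 h ⟨by rw [zero_pow hp.pos.ne', zero_add], by simp⟩
      rw [AddVal.tdiff, AddVal.tdiff, if_neg hρ, if_neg hh] at hle
      have : w.gauss h - w.gauss h ≤ w.gauss ρ - w.gauss h := by exact_mod_cast hle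
      linarith
  · -- no p-th-power approximation ⟹ no improvement
    intro hnex q₁ ρ₁ hd₁
    obtain ⟨hdec₁, hdq₁⟩ := hd₁
    by_contra hcon
    have hb : ρ₁ = 0 ∨ w.gauss ρ < w.gauss ρ₁ := by
      rw [AddVal.tdiff, AddVal.tdiff, if_neg hρ] at hcon
      by_cases h0 : ρ₁ = 0
      · left; exact h0
      · right
        rw [if_neg h0] at hcon
        have := not_le.mp hcon
        have : w.gauss ρ - w.gauss h < w.gauss ρ₁ - w.gauss h := by exact_mod_cast this
        linarith
    apply hnex
    by_cases hty : w.gauss h ≤ w.gauss ρ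
    · by_cases hq0 : q = 0
      · -- then ρ = h and q₁, ρ₁ give directly a decomposition of ρ
        have hρh : ρ = h := by rw [hdec, hq0, zero_pow hp.pos.ne', zero_add]
        exact ⟨q₁, ρ₁, by rw [hρh]; exact hdec₁, toT ρ₁ hb⟩
      by_cases hq₁0 : q₁ = 0
      · -- then ρ₁ = h; contradicts t ≥ 0
        exfalso
        have hρ₁h : ρ₁ = h := by rw [hdec₁, hq₁0, zero_pow hp.pos.ne', zero_add]
        rcases hb with h0 | hgl
        · exact hh (hρ₁h ▸ h0)
        · rw [hρ₁h] at hgl; linarith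
      · obtain ⟨s, ρ₀, heq, hlt⟩ := w.extract hp hζ hh hρ hq0 hq₁0 hdec hdec₁ hty ht hb
        exact ⟨s, ρ₀, heq, toT ρ₀ hlt⟩
    · -- t < 0 : ρ = (ωq)^p + h with ω^p = -1
      push_neg at hty
      have hq0 : q ≠ 0 := by
        intro h0
        rw [h0, zero_pow hp.pos.ne', zero_add] at hdec
        rw [hdec] at hty
        exact lt_irrefl _ hty
      obtain ⟨ω, hω⟩ := IsAlgClosed.exists_pow_nat_eq (-1 : K) hp.pos
      refine ⟨Polynomial.C ω * q, h, ?_, toT h (Or.inr hty)⟩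
      rw [mul_pow, ← Polynomial.C_pow, hω]
      have : (Polynomial.C (-1 : K)) = -1 := by simp
      rw [this]
      linear_combination -hdec
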